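/- Let n ≥ 1, let p be an integer with 1 ≤ p ≤ n, let A be an n×n real matrix, and let (D_p^k)_{k≥0} be the associated over-approximation sequence. Then for all i, j ∈ {1,…,n}, D_p^1(i,j) = min{A(i,1) − A(j,1), …, A(i,n) − A(j,n)} (a real number). In particular D_p^1 does not depend on p, i.e., D_1^1 = D_2^1 = ⋯ = D_n^1. -/

import Mathlib

/-- `MinMaxValue(F | p, n+1−p)`: the minimum over all pairs `(S₁, S₂)` of subsets of
`{1,…,n}` with `|S₁| = p` and `|S₂| = n+1−p` of `max_{(i,j) ∈ S₁×S₂} F i j`, where the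
entries lie in `ℝ ∪ {−∞}` (modeled as `WithBot ℝ`). -/
noncomputable def minMaxValue {n : ℕ} (p : ℕ) (F : Fin n → Fin n → WithBot ℝ) : WithBot ℝ :=
  sInf {v : WithBot ℝ | ∃ S₁ S₂ : Finset (Fin n), S₁.card = p ∧ S₂.card = n + 1 - p ∧
    v = (S₁ ×ˢ S₂).sup (fun q => F q.1 q.2)}

/-- The over-approximation sequence `(D_p^k)_{k ≥ 0}` associated with `A`: `D_p^0` is the
max-plus identity matrix and
`D_p^{k+1}(i,j) = MinMaxValue((l,m) ↦ A i l − A j m + D_p^k l m | p, n+1−p)`. -/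
noncomputable def Dseq {n : ℕ} (A : Fin n → Fin n → ℝ) (p : ℕ) :
    ℕ → Fin n → Fin n → WithBot ℝ
  | 0 => fun i j => if i = j then 0 else ⊥
  | (k + 1) => fun i j =>
      minMaxValue p (fun l m => ((A i l - A j m : ℝ) : WithBot ℝ) + Dseq A p k l m)

/-- The zone of a DBM `D` over `ℝ ∪ {−∞}`: all real vectors `x` with
`x i − x j ≥ D i j` for all `i, j`. -/
def zone {n : ℕ} (D : Fin n → Fin n → WithBot ℝ) : Set (Fin n → ℝ) :=
  {x | ∀ i j, D i j ≤ ((x i - x j : ℝ) : WithBot ℝ)}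


lemma Dseq_one_aux (n p : ℕ) (hn : 1 ≤ n) (hp1 : 1 ≤ p) (hpn : p ≤ n)
    (A : Fin n → Fin n → ℝ) (i j : Fin n) :
    Dseq A p 1 i j =
      (((Finset.univ : Finset (Fin n)).inf' ⟨⟨0, hn⟩, Finset.mem_univ _⟩
        (fun l => A i l - A j l) : ℝ) : WithBot ℝ) := by
  have hne : (Finset.univ : Finset (Fin n)).Nonempty := ⟨⟨0, hn⟩, Finset.mem_univ _⟩
  set m : ℝ := (Finset.univ : Finset (Fin n)).inf' hne (fun l => A i l - A j l) with hm
  -- the function F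
  have hF : ∀ l m' : Fin n,
      ((A i l - A j m' : ℝ) : WithBot ℝ) + Dseq A p 0 l m'
        = if l = m' then ((A i l - A j l : ℝ) : WithBot ℝ) else ⊥ := by
    intro l m'
    by_cases h : l = m'
    · subst h; simp [Dseq]
    · simp [Dseq, h]
  show minMaxValue p (fun l m' => ((A i l - A j m' : ℝ) : WithBot ℝ) + Dseq A p 0 l m') = (m : WithBot ℝ)
  unfold minMaxValue
  apply le_antisymm
  · -- sInf ≤ m : exhibit witness
    obtain ⟨l₀, -, hl₀⟩ := Finset.exists_mem_eq_inf' hne (fun l => A i l - A j l)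
    obtain ⟨S₁, hsub, -, hS₁card⟩ := Finset.exists_subsuperset_card_eq
      (Finset.subset_univ {l₀}) (by simpa using hp1) (by simpa using hpn)
    have hl₀S₁ : l₀ ∈ S₁ := hsub (Finset.mem_singleton_self l₀)
    set S₂ : Finset (Fin n) := S₁ᶜ ∪ {l₀} with hS₂
    have hS₂card : S₂.card = n + 1 - p := by
      rw [hS₂, Finset.card_union_of_disjoint (by simp [Finset.disjoint_singleton_right, hl₀S₁])]
      rw [Finset.card_compl, hS₁card, Finset.card_singleton, Fintype.card_fin]
      omega
    have hl₀S₂ : l₀ ∈ S₂ := by simp [hS₂]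
    have hinter : ∀ x, x ∈ S₁ → x ∈ S₂ → x = l₀ := by
      intro x hx1 hx2
      rcases Finset.mem_union.1 hx2 with h | h
      · exact absurd hx1 (Finset.mem_compl.1 h)
      · exact Finset.mem_singleton.1 h
    apply csInf_le (OrderBot.bddBelow _)
    refine ⟨S₁, S₂, hS₁card, hS₂card, ?_⟩
    apply le_antisymm
    · rw [hm, hl₀]
      calc ((A i l₀ - A j l₀ : ℝ) : WithBot ℝ)
          = ((A i l₀ - A j l₀ : ℝ) : WithBot ℝ) + Dseq A p 0 l₀ l₀ := by
            rw [hF]; simp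
        _ ≤ _ := Finset.le_sup (f := fun q : Fin n × Fin n => ((A i q.1 - A j q.2 : ℝ) : WithBot ℝ) + Dseq A p 0 q.1 q.2) (Finset.mk_mem_product hl₀S₁ hl₀S₂)
    · apply Finset.sup_le
      rintro ⟨a, b⟩ hab
      obtain ⟨ha, hb⟩ := Finset.mem_product.1 hab
      dsimp only
      rw [hF]
      by_cases h : a = b
      · subst h
        have : a = l₀ := hinter a ha hb
        subst this
        simp [hm, hl₀]
      · simp [h]
  · -- m ≤ sInf
    obtain ⟨T₁, -, hT₁⟩ := Finset.exists_subset_card_eq (s := (Finset.univ : Finset (Fin n))) (n := p)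
      (by simpa using hpn)
    obtain ⟨T₂, -, hT₂⟩ := Finset.exists_subset_card_eq (s := (Finset.univ : Finset (Fin n))) (n := n + 1 - p)
      (by simp; omega)
    refine le_csInf ⟨_, ⟨T₁, T₂, hT₁, hT₂, rfl⟩⟩ ?_
    rintro v ⟨S₁, S₂, hS₁, hS₂, rfl⟩
    have hcap : (S₁ ∩ S₂).Nonempty := by
      rw [← Finset.card_pos]
      have h1 := Finset.card_union_add_card_inter S₁ S₂
      have h2 : (S₁ ∪ S₂).card ≤ n := by
        simpa using Finset.card_le_card (Finset.subset_univ (S₁ ∪ S₂))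
      omega
    obtain ⟨l, hl⟩ := hcap
    obtain ⟨hl1, hl2⟩ := Finset.mem_inter.1 hl
    calc (m : WithBot ℝ) ≤ ((A i l - A j l : ℝ) : WithBot ℝ) := by
          exact_mod_cast Finset.inf'_le _ (Finset.mem_univ l)
      _ = ((A i l - A j l : ℝ) : WithBot ℝ) + Dseq A p 0 l l := by rw [hF]; simp
      _ ≤ _ := Finset.le_sup (f := fun q : Fin n × Fin n => ((A i q.1 - A j q.2 : ℝ) : WithBot ℝ) + Dseq A p 0 q.1 q.2) (Finset.mk_mem_product hl1 hl2)


/-- `D_p^1(i,j) = min_l (A i l − A j l)` (a real number); in particular `D_p^1` does not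
depend on `p`. -/
theorem Dseq_one_eq (n p : ℕ) (hn : 1 ≤ n) (hp1 : 1 ≤ p) (hpn : p ≤ n)
    (A : Fin n → Fin n → ℝ) :
    (∀ i j, Dseq A p 1 i j =
      (((Finset.univ : Finset (Fin n)).inf' ⟨⟨0, hn⟩, Finset.mem_univ _⟩
        (fun l => A i l - A j l) : ℝ) : WithBot ℝ)) ∧
    (∀ q : ℕ, 1 ≤ q → q ≤ n → Dseq A p 1 = Dseq A q 1) := by
  refine ⟨fun i j => Dseq_one_aux n p hn hp1 hpn A i j, fun q hq1 hqn => ?_⟩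
  funext i j
  rw [Dseq_one_aux n p hn hp1 hpn A i j, Dseq_one_aux n q hn hq1 hqn A i j]
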